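/- Taylor remainder bound for powers (superquadratic case): let p > 2. There exists C > 0 depending only on p such that for all u ≥ 0 and v ∈ ℝ with u + v ≥ 0, | (u+v)^{p+1} − u^{p+1} − (p+1)u^p v − (p(p+1)/2) u^{p−1} v² | ≤ C ( u^{p−2}|v|³ + |v|^{p+1} ). -/

import Mathlib

open Real Set

/-- MVT bound for differences of powers. -/
lemma rpow_sub_rpow_abs_le (q : ℝ) (hq : 1 ≤ q) {x y : ℝ} (hx : 0 ≤ x) (hy : 0 ≤ y) :
    |x ^ q - y ^ q| ≤ q * max x y ^ (q - 1) * |x - y| := by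
  have hq0 : 0 ≤ q := le_trans zero_le_one hq
  have hq1 : 0 ≤ q - 1 := by linarith
  have key := Convex.norm_image_sub_le_of_norm_hasDerivWithin_le
    (f := fun z : ℝ => z ^ q) (f' := fun z : ℝ => q * z ^ (q - 1))
    (s := Set.uIcc y x) (C := q * max x y ^ (q - 1))
    (fun z _ => (Real.hasDerivAt_rpow_const (Or.inr hq)).hasDerivWithinAt)
    (fun z hz => by
      have hz0 : 0 ≤ z := by
        rcases Set.mem_uIcc.mp hz with h | h
        · exact le_trans hy h.1
        · exact le_trans hx h.1
      have hzle : z ≤ max x y := by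
        rcases Set.mem_uIcc.mp hz with h | h
        · exact le_trans h.2 (le_max_left x y)
        · exact le_trans h.2 (le_max_right x y)
      have : z ^ (q - 1) ≤ max x y ^ (q - 1) :=
        Real.rpow_le_rpow hz0 hzle hq1
      have hnn : 0 ≤ z ^ (q - 1) := Real.rpow_nonneg hz0 _
      rw [Real.norm_eq_abs, abs_mul, abs_of_nonneg hq0, abs_of_nonneg hnn]
      exact mul_le_mul_of_nonneg_left this hq0)
    (convex_uIcc y x) Set.left_mem_uIcc Set.right_mem_uIcc
  simpa [Real.norm_eq_abs] using key

theorem stmt8 (p : ℝ) (hp : 2 < p) :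
    ∃ C > 0, ∀ u v : ℝ, 0 ≤ u → 0 ≤ u + v →
      |(u + v) ^ (p + 1) - u ^ (p + 1) - (p + 1) * u ^ p * v -
          (p * (p + 1) / 2) * u ^ (p - 1) * v ^ 2| ≤
        C * (u ^ (p - 2) * |v| ^ 3 + |v| ^ (p + 1)) := by
  have hp0 : (0:ℝ) < p := by linarith
  have hp1 : (1:ℝ) ≤ p + 1 := by linarith
  have hp2 : (1:ℝ) ≤ p := by linarith
  have hp3 : (1:ℝ) ≤ p - 1 := by linarith
  have h2p : (0:ℝ) < 2 ^ (p - 2) := Real.rpow_pos_of_pos (by norm_num) _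
  set K : ℝ := p * (p + 1) * (p - 1) * 2 ^ (p - 2) with hK
  have hKpos : 0 < K := by positivity
  refine ⟨K, hKpos, fun u v hu huv => ?_⟩
  set I : Set ℝ := Set.uIcc (0:ℝ) v with hI
  have hmem : ∀ s ∈ I, 0 ≤ u + s ∧ |s| ≤ |v| := by
    intro s hs
    rcases Set.mem_uIcc.mp hs with h | h
    · constructor
      · linarith [h.1]
      · rw [abs_of_nonneg h.1, abs_of_nonneg (le_trans h.1 h.2)]; exact h.2
    · constructor
      · linarith [h.1]
      · rw [abs_of_nonpos h.2, abs_of_nonpos (le_trans h.1 h.2)]; linarith [h.1]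
  set g : ℝ → ℝ := fun s => (u + s) ^ (p + 1) - u ^ (p + 1) - (p + 1) * u ^ p * s -
      (p * (p + 1) / 2) * u ^ (p - 1) * s ^ 2 with hg
  set g' : ℝ → ℝ := fun s => (p + 1) * (u + s) ^ p - (p + 1) * u ^ p -
      p * (p + 1) * u ^ (p - 1) * s with hg'
  set g'' : ℝ → ℝ := fun s => p * (p + 1) * (u + s) ^ (p - 1) - p * (p + 1) * u ^ (p - 1)
    with hg''
  have hbase : ∀ s : ℝ, HasDerivAt (fun t : ℝ => u + t) 1 s := fun s => by
    simpa using (hasDerivAt_id s).const_add u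
  have hder1 : ∀ s : ℝ, HasDerivAt g (g' s) s := by
    intro s
    have h1 : HasDerivAt (fun t : ℝ => (u + t) ^ (p + 1))
        ((p + 1) * (u + s) ^ (p + 1 - 1) * 1) s :=
      (Real.hasDerivAt_rpow_const (Or.inr hp1)).comp s (hbase s)
    have h2 : HasDerivAt (fun t : ℝ => (p + 1) * u ^ p * t) ((p + 1) * u ^ p * 1) s :=
      (hasDerivAt_id s).const_mul _
    have h3 : HasDerivAt (fun t : ℝ => (p * (p + 1) / 2) * u ^ (p - 1) * t ^ 2)
        ((p * (p + 1) / 2) * u ^ (p - 1) * (2 * s ^ 1)) s :=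
      (hasDerivAt_pow 2 s).const_mul _
    have h := ((h1.sub_const (u ^ (p + 1))).sub h2).sub h3
    convert h using 1
    · rfl
    · rfl
    · rfl
    rw [show p + 1 - 1 = p by ring]
    simp [hg']; ring
  have hder2 : ∀ s : ℝ, HasDerivAt g' (g'' s) s := by
    intro s
    have h1 : HasDerivAt (fun t : ℝ => (u + t) ^ p)
        (p * (u + s) ^ (p - 1) * 1) s :=
      (Real.hasDerivAt_rpow_const (Or.inr hp2)).comp s (hbase s)
    have h1' := h1.const_mul (p + 1)
    have h2 : HasDerivAt (fun t : ℝ => p * (p + 1) * u ^ (p - 1) * t)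
        (p * (p + 1) * u ^ (p - 1) * 1) s :=
      (hasDerivAt_id s).const_mul _
    have h := (h1'.sub_const ((p + 1) * u ^ p)).sub h2
    convert h using 1
    · rfl
    · rfl
    · rfl
    simp [hg'']; ring
  set B : ℝ := K * (u ^ (p - 2) + |v| ^ (p - 2)) * |v| with hB
  have hBnn : 0 ≤ B := by positivity
  -- bound on g'' over I
  have hgpp : ∀ s ∈ I, |g'' s| ≤ B := by
    intro s hs
    obtain ⟨hus, hsv⟩ := hmem s hs
    have key := rpow_sub_rpow_abs_le (p - 1) hp3 hus hu
    have hxy : |(u + s) - u| = |s| := by ring_nf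
    rw [hxy] at key
    have hmax : max (u + s) u ≤ u + |v| := by
      have : s ≤ |v| := le_trans (le_abs_self s) hsv
      have : u + s ≤ u + |v| := by linarith
      exact max_le this (le_add_of_nonneg_right (abs_nonneg v))
    have hmaxnn : (0:ℝ) ≤ max (u + s) u := le_max_of_le_right hu
    have hq2 : (0:ℝ) ≤ p - 2 := by linarith
    have hpow1 : max (u + s) u ^ (p - 1 - 1) ≤ (u + |v|) ^ (p - 2) := by
      rw [show p - 1 - 1 = p - 2 by ring]
      exact Real.rpow_le_rpow hmaxnn hmax hq2
    have hpow2 : (u + |v|) ^ (p - 2) ≤ 2 ^ (p - 2) * (u ^ (p - 2) + |v| ^ (p - 2)) := by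
      have h1 : u + |v| ≤ 2 * max u |v| := by
        have := le_max_left u |v|; have := le_max_right u |v|; linarith
      have h2 : (u + |v|) ^ (p - 2) ≤ (2 * max u |v|) ^ (p - 2) :=
        Real.rpow_le_rpow (by positivity) h1 hq2
      have h3 : (2 * max u |v|) ^ (p - 2) = 2 ^ (p - 2) * (max u |v|) ^ (p - 2) :=
        Real.mul_rpow (by norm_num) (le_max_of_le_left hu)
      have h4 : (max u |v|) ^ (p - 2) ≤ u ^ (p - 2) + |v| ^ (p - 2) := by
        rcases max_cases u |v| with ⟨hm, _⟩ | ⟨hm, _⟩ <;> rw [hm]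
        · exact le_add_of_nonneg_right (Real.rpow_nonneg (abs_nonneg v) _)
        · exact le_add_of_nonneg_left (Real.rpow_nonneg hu _)
      calc (u + |v|) ^ (p - 2) ≤ 2 ^ (p - 2) * (max u |v|) ^ (p - 2) := by rw [← h3]; exact h2
        _ ≤ 2 ^ (p - 2) * (u ^ (p - 2) + |v| ^ (p - 2)) := by
            exact mul_le_mul_of_nonneg_left h4 (le_of_lt h2p)
    have hs1 : |g'' s| = p * (p + 1) * |(u + s) ^ (p - 1) - u ^ (p - 1)| := by
      simp only [hg'']
      rw [show p * (p + 1) * (u + s) ^ (p - 1) - p * (p + 1) * u ^ (p - 1)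
        = p * (p + 1) * ((u + s) ^ (p - 1) - u ^ (p - 1)) by ring, abs_mul,
        abs_of_nonneg (by positivity : (0:ℝ) ≤ p * (p + 1))]
    rw [hs1]
    calc p * (p + 1) * |(u + s) ^ (p - 1) - u ^ (p - 1)|
        ≤ p * (p + 1) * ((p - 1) * max (u + s) u ^ (p - 1 - 1) * |s|) := by
          exact mul_le_mul_of_nonneg_left key (by positivity)
      _ ≤ p * (p + 1) * ((p - 1) * (2 ^ (p - 2) * (u ^ (p - 2) + |v| ^ (p - 2))) * |v|) := by
          have hc : max (u + s) u ^ (p - 1 - 1) * |s|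
              ≤ 2 ^ (p - 2) * (u ^ (p - 2) + |v| ^ (p - 2)) * |v| :=
            mul_le_mul (le_trans hpow1 hpow2) hsv (abs_nonneg s)
              (mul_nonneg h2p.le (add_nonneg (Real.rpow_nonneg hu _)
                (Real.rpow_nonneg (abs_nonneg v) _)))
          nlinarith [abs_nonneg s, abs_nonneg v]
      _ = B := by rw [hB, hK]; ring
  -- bound on g' over I : |g' s| ≤ B * |v|
  have hgp : ∀ s ∈ I, |g' s| ≤ B * |v| := by
    intro s hs
    have key := Convex.norm_image_sub_le_of_norm_hasDerivWithin_le
      (f := g') (f' := g'') (s := I) (C := B)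
      (fun t ht => (hder2 t).hasDerivWithinAt)
      (fun t ht => by rw [Real.norm_eq_abs]; exact hgpp t ht)
      (convex_uIcc 0 v) Set.left_mem_uIcc hs
    have hg0 : g' 0 = 0 := by simp [hg']
    rw [hg0, sub_zero, sub_zero, Real.norm_eq_abs, Real.norm_eq_abs] at key
    exact le_trans key (mul_le_mul_of_nonneg_left (hmem s hs).2 hBnn)
  -- final bound
  have key := Convex.norm_image_sub_le_of_norm_hasDerivWithin_le
    (f := g) (f' := g') (s := I) (C := B * |v|)
    (fun t ht => (hder1 t).hasDerivWithinAt)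
    (fun t ht => by rw [Real.norm_eq_abs]; exact hgp t ht)
    (convex_uIcc 0 v) Set.left_mem_uIcc Set.right_mem_uIcc
  have hg0 : g 0 = 0 := by simp [hg]
  rw [hg0, sub_zero, sub_zero, Real.norm_eq_abs, Real.norm_eq_abs] at key
  have hrw : |v| ^ (p - 2) * |v| ^ (3:ℕ) = |v| ^ (p + 1) := by
    rw [← Real.rpow_natCast |v| 3, ← Real.rpow_add' (abs_nonneg v) (by push_cast; intro h; linarith)]
    congr 1
    push_cast
    ring
  have hfin : B * |v| * |v| = K * (u ^ (p - 2) * |v| ^ 3 + |v| ^ (p + 1)) := by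
    rw [← hrw, hB]; ring
  calc |g v| ≤ B * |v| * |v| := key
    _ = K * (u ^ (p - 2) * |v| ^ 3 + |v| ^ (p + 1)) := hfin
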